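/- Let h : ℕ → ℕ → ℤ satisfy π(h r j) ≥ 0 for 1 ≤ j ≤ r and π(h r j) ≥ j - r for j > r, where π is the 13-adic valuation (and the condition is vacuous when h r j = 0). Let k : ℕ → ℤ with π(k r) = r - 1 for 1 ≤ r ≤ 6 and π(k 7) = 5. Then for every j ≥ 1 and every r with 1 ≤ r ≤ 7 (and k r · h r j ≠ 0), π((k r) * (h r j)) ≥ ⌊(13j - 9)/14⌋. -/
import Mathlib


theorem stmt14 (h : ℕ → ℕ → ℤ) (k : ℕ → ℤ)
    (hh1 : ∀ r j : ℕ, 1 ≤ j → j ≤ r → h r j ≠ 0 → (0:ℤ) ≤ (padicValInt 13 (h r j) : ℤ))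
    (hh2 : ∀ r j : ℕ, r < j → h r j ≠ 0 → ((j:ℤ) - r) ≤ (padicValInt 13 (h r j) : ℤ))
    (hk : ∀ r : ℕ, 1 ≤ r → r ≤ 6 → (padicValInt 13 (k r) : ℤ) = (r:ℤ) - 1)
    (hk7 : padicValInt 13 (k 7) = 5) :
    ∀ j r : ℕ, 1 ≤ j → 1 ≤ r → r ≤ 7 → k r * h r j ≠ 0 →
      ((13 * (j:ℤ) - 9).fdiv 14) ≤ (padicValInt 13 (k r * h r j) : ℤ) := by
  intro j r hj hr hr7 hne
  haveI : Fact (Nat.Prime 13) := ⟨by norm_num⟩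
  have hk0 : k r ≠ 0 := left_ne_zero_of_mul hne
  have hh0 : h r j ≠ 0 := right_ne_zero_of_mul hne
  rw [padicValInt.mul hk0 hh0, Int.fdiv_eq_ediv_of_nonneg _ (by norm_num)]
  push_cast
  rcases Nat.lt_or_ge r 7 with h7 | h7
  · have hvk := hk r hr (by omega)
    rcases le_or_gt j r with hjr | hjr
    · have hvh := hh1 r j hj hjr hh0
      omega
    · have hvh := hh2 r j hjr hh0
      omega
  · have hr7' : r = 7 := by omega
    subst hr7'
    rcases le_or_gt j 7 with hjr | hjr
    · have hvh := hh1 7 j hj hjr hh0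
      rw [hk7]
      omega
    · have hvh := hh2 7 j hjr hh0
      rw [hk7]
      omega
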